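/- Let A be a Noetherian integral domain with fraction field K, let M be a finitely generated A-module, and let u ∈ M be an element whose image in M ⊗_A K is nonzero. Then there exists a nonzero f ∈ A such that for every field k and every ring homomorphism A_f → k, the image of u in M ⊗_A k is nonzero. -/

import Mathlib

open scoped TensorProduct

set_option synthInstance.maxHeartbeats 800000 in
/-- If an element `u` of a finitely generated module `M` over a Noetherian
domain `A` has nonzero image in `M ⊗_A K` (`K` the fraction field), then there
is a nonzero `f ∈ A` such that for every field `k` and every ring homomorphism
`A_f → k` (equivalently, every `A`-algebra structure on `k` in which `f` is
invertible, i.e. nonzero) the image of `u` in `M ⊗_A k` is nonzero. -/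
theorem generic_nonvanishing
    {A M : Type*} [CommRing A] [IsDomain A] [IsNoetherianRing A]
    [AddCommGroup M] [Module A M] [Module.Finite A M] (u : M)
    (hu : (1 : FractionRing A) ⊗ₜ[A] u ≠ (0 : FractionRing A ⊗[A] M)) :
    ∃ f : A, f ≠ 0 ∧
      ∀ (k : Type) [Field k] [Algebra A k],
        algebraMap A k f ≠ 0 → (1 : k) ⊗ₜ[A] u ≠ (0 : k ⊗[A] M) := by
  set K := FractionRing A
  -- pick a K-linear functional not vanishing on 1 ⊗ u
  obtain ⟨φ, hφ⟩ : ∃ φ : Module.Dual K (K ⊗[A] M), φ ((1 : K) ⊗ₜ[A] u) ≠ 0 := by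
    by_contra h
    push_neg at h
    exact hu ((Module.forall_dual_apply_eq_zero_iff K _).mp h)
  -- A-linear map ψ : M → K with ψ u ≠ 0
  set ψ : M →ₗ[A] K := (φ.restrictScalars A).comp ((TensorProduct.mk A K M) 1) with hψdef
  have hψu : ψ u ≠ 0 := hφ
  -- clear denominators on a finite generating set
  obtain ⟨s, hs⟩ : ∃ s : Finset M, Submodule.span A (s : Set M) = ⊤ :=
    Module.Finite.fg_top (R := A) (M := M)
  obtain ⟨b, hb⟩ := IsLocalization.exist_integer_multiples (nonZeroDivisors A) s
    (fun m => ψ m)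
  set d : A := (b : A) with hd
  have hd0 : d ≠ 0 := nonZeroDivisors.coe_ne_zero b
  set θ : M →ₗ[A] K := d • ψ with hθdef
  have hainj : Function.Injective (algebraMap A K) := IsFractionRing.injective A K
  have hθrange : ∀ m : M, θ m ∈ LinearMap.range (Algebra.linearMap A K) := by
    have hle : Submodule.span A (s : Set M) ≤
        Submodule.comap θ (LinearMap.range (Algebra.linearMap A K)) :=
      Submodule.span_le.mpr fun x hx => by
        obtain ⟨a, ha⟩ := hb x hx
        exact ⟨a, ha⟩
    intro m
    exact hle (by rw [hs]; trivial)
  have hlinj : Function.Injective (Algebra.linearMap A K) := hainj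
  set e : A ≃ₗ[A] LinearMap.range (Algebra.linearMap A K) :=
    LinearEquiv.ofInjective (Algebra.linearMap A K) hlinj with he
  set g : M →ₗ[A] A := e.symm.toLinearMap.comp (θ.codRestrict _ hθrange) with hg
  have hgspec : ∀ m : M, algebraMap A K (g m) = θ m := by
    intro m
    have : (e (g m) : K) = θ m := by
      simp only [hg, LinearMap.comp_apply, LinearEquiv.coe_coe,
        LinearEquiv.apply_symm_apply, LinearMap.codRestrict_apply]
    rw [he, LinearEquiv.ofInjective_apply] at this
    exact this
  refine ⟨g u, ?_, ?_⟩
  · intro h0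
    have : algebraMap A K (g u) = 0 := by rw [h0, map_zero]
    rw [hgspec] at this
    have : d • ψ u = 0 := this
    rw [Algebra.smul_def] at this
    rcases mul_eq_zero.mp this with h | h
    · exact hd0 (hainj (by simpa using h))
    · exact hψu h
  · intro k _ _ hf h0
    -- map k ⊗ M → k via g
    have hL : (TensorProduct.rid A k).toLinearMap.comp (LinearMap.lTensor k g)
        ((1 : k) ⊗ₜ[A] u) = algebraMap A k (g u) := by
      simp [Algebra.algebraMap_eq_smul_one]
    rw [h0, map_zero] at hL
    exact hf hL.symm
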